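/- For standard updates α and β, if the epistemic proposition φ is preserved by bisimulations and α ∼ β, then [α]φ = [β]φ as epistemic propositions, i.e., for every state model S, ([α]φ)_S = ([β]φ)_S. -/
import Mathlib


structure StateModel (Agent Atom : Type) where
  World : Type
  rel : Agent → World → World → Prop
  val : Atom → World → Prop

def IsBisim {Agent Atom : Type} (S T : StateModel Agent Atom)
    (R : S.World → T.World → Prop) : Prop :=
  ∀ s t, R s t →
    (∀ p, S.val p s ↔ T.val p t) ∧
    (∀ A s', S.rel A s s' → ∃ t', T.rel A t t' ∧ R s' t') ∧
    (∀ A t', T.rel A t t' → ∃ s', S.rel A s s' ∧ R s' t')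

def IsTotalBisim {Agent Atom : Type} (S T : StateModel Agent Atom)
    (R : S.World → T.World → Prop) : Prop :=
  IsBisim S T R ∧ (∀ s, ∃ t, R s t) ∧ (∀ t, ∃ s, R s t)

/-- An update: an operation on state models together with a transition relation
from each model into its update. -/
structure Update (Agent Atom : Type) where
  model : StateModel Agent Atom → StateModel Agent Atom
  rel : (S : StateModel Agent Atom) → S.World → (model S).World → Prop

/-- Updates α and β are equivalent if for every total bisimulation `R` between `S`
and `T`, the relation `(α_S)⁻¹ ; R ; β_T` is a total bisimulation between `S(α)`
and `T(β)`. -/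
def UpdEquiv {Agent Atom : Type} (α β : Update Agent Atom) : Prop :=
  ∀ (S T : StateModel Agent Atom) (R : S.World → T.World → Prop),
    IsTotalBisim S T R →
    IsTotalBisim (α.model S) (β.model T)
      (fun x y => ∃ s t, α.rel S s x ∧ R s t ∧ β.rel T t y)


/-- An epistemic proposition assigns to each state model a set of its worlds. -/
def EProp (Agent Atom : Type) := (S : StateModel Agent Atom) → Set S.World

def Preserved {Agent Atom : Type} (φ : EProp Agent Atom) : Prop :=
  ∀ (S T : StateModel Agent Atom) (R : S.World → T.World → Prop),
    IsBisim S T R → ∀ s t, R s t → (s ∈ φ S ↔ t ∈ φ T)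

/-- An update is standard if the converse of each update relation is a partial
function: each target state has at most one source. -/
def Update.Standard {Agent Atom : Type} (α : Update Agent Atom) : Prop :=
  ∀ (S : StateModel Agent Atom) (t : (α.model S).World) (s s' : S.World),
    α.rel S s t → α.rel S s' t → s = s'

/-- The dynamic box modality `[α]φ` determined by an update. -/
def boxU {Agent Atom : Type} (α : Update Agent Atom) (φ : EProp Agent Atom) :
    EProp Agent Atom :=
  fun S => {s | ∀ t, α.rel S s t → t ∈ φ (α.model S)}

theorem box_respects_updEquiv {Agent Atom : Type} (α β : Update Agent Atom)
    (hα : α.Standard) (hβ : β.Standard) (φ : EProp Agent Atom)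
    (hφ : Preserved φ) (hαβ : UpdEquiv α β) :
    ∀ S : StateModel Agent Atom, boxU α φ S = boxU β φ S := by
  intro S
  have hId : IsTotalBisim S S (fun a b => a = b) := by
    refine ⟨fun s t h => ?_, fun s => ⟨s, rfl⟩, fun t => ⟨t, rfl⟩⟩
    subst h
    exact ⟨fun p => Iff.rfl, fun A s' h => ⟨s', h, rfl⟩, fun A t' h => ⟨t', h, rfl⟩⟩
  have hQ := hαβ S S _ hId
  obtain ⟨hQb, hQl, hQr⟩ := hQ
  ext s
  constructor
  · intro hs y hy
    obtain ⟨x, ⟨s', t', hax, hst, hbt⟩⟩ := hQr y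
    subst hst
    have : s' = s := hβ S y s' s hbt hy
    subst this
    exact (hφ _ _ _ hQb x y ⟨_, _, hax, rfl, hbt⟩).mp (hs x hax)
  · intro hs x hx
    obtain ⟨y, ⟨s', t', hax, hst, hbt⟩⟩ := hQl x
    subst hst
    have : s' = s := hα S x s' s hax hx
    subst this
    exact (hφ _ _ _ hQb x y ⟨_, _, hax, rfl, hbt⟩).mpr (hs y hbt)
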